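/- Let (D⁺, D⁻) be training data in ℝ^p with N⁺ = card D⁺ and N⁻ = card D⁻, let α = (α⁺, α⁻) satisfy 2α⁺ < N⁺ and 2α⁻ < N⁻, and let (E⁺, E⁻) be an α-bounded feature attack on (D⁺, D⁻). Then every affine classifier h satisfying the majority constraint on (E⁺, E⁻) satisfies err⁺(h, D⁺) < N⁺ and err⁻(h, D⁻) < N⁻; that is, h misclassifies strictly fewer than all positive feature vectors and strictly fewer than all negative feature vectors of the un-attacked training data. (Hence the majority 0-1 loss linear classification algorithm is resilient whenever 2α⁺ < N⁺ and 2α⁻ < N⁻.) -/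

import Mathlib

open scoped Classical BigOperators

/-- Value of the affine classifier `h = (w, b)` at feature vector `x`. -/
noncomputable def hval {p : ℕ} (h : (Fin p → ℝ) × ℝ) (x : Fin p → ℝ) : ℝ :=
  (∑ i, h.1 i * x i) + h.2

/-- Number of positive feature vectors in `S` misclassified by `h` (with multiplicity). -/
noncomputable def errPos {p : ℕ} (h : (Fin p → ℝ) × ℝ) (S : Multiset (Fin p → ℝ)) : ℕ :=
  Multiset.countP (fun x => hval h x ≤ 0) S

/-- Number of negative feature vectors in `S` misclassified by `h` (with multiplicity). -/
noncomputable def errNeg {p : ℕ} (h : (Fin p → ℝ) × ℝ) (S : Multiset (Fin p → ℝ)) : ℕ :=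
  Multiset.countP (fun x => 0 < hval h x) S

/-- `(Ep, En)` is an `(ap, an)`-bounded feature attack on `(Dp, Dn)`. -/
noncomputable def IsBFA {p : ℕ} (ap an : ℕ) (Dp Dn Ep En : Multiset (Fin p → ℝ)) : Prop :=
  Multiset.card Ep = Multiset.card Dp ∧
  Multiset.card En = Multiset.card Dn ∧
  Multiset.card (Ep - Dp) ≤ ap ∧
  Multiset.card (En - Dn) ≤ an

/-- `(Dp, Dn)` is linearly separable. -/
def LinSep {p : ℕ} (Dp Dn : Multiset (Fin p → ℝ)) : Prop :=
  ∃ h : (Fin p → ℝ) × ℝ, errPos h Dp = 0 ∧ errNeg h Dn = 0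

/-- `h` satisfies the majority constraint on `(Ep, En)`. -/
def Majority {p : ℕ} (h : (Fin p → ℝ) × ℝ) (Ep En : Multiset (Fin p → ℝ)) : Prop :=
  2 * errPos h Ep < Multiset.card Ep ∧ 2 * errNeg h En < Multiset.card En

lemma key_count {α : Type*} (q : α → Prop) [DecidablePred q] (D E : Multiset α)
    (hc : Multiset.card E = Multiset.card D) :
    Multiset.countP q D ≤ Multiset.countP q E + Multiset.card (E - D) := by
  have h1 := Multiset.sub_add_inter D E
  have h2 := Multiset.sub_add_inter E D
  have h3 : Multiset.countP q D = Multiset.countP q (D - E) + Multiset.countP q (D ∩ E) := by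
    conv_lhs => rw [← h1]
    rw [Multiset.countP_add]
  have h4 : Multiset.countP q (D ∩ E) ≤ Multiset.countP q E :=
    Multiset.countP_le_of_le _ Multiset.inter_le_right
  have h5 : Multiset.card (D - E) = Multiset.card (E - D) := by
    have c1 : Multiset.card (D - E) + Multiset.card (D ∩ E) = Multiset.card D := by
      rw [← Multiset.card_add, h1]
    have c2 : Multiset.card (E - D) + Multiset.card (E ∩ D) = Multiset.card E := by
      rw [← Multiset.card_add, h2]
    rw [Multiset.inter_comm] at c2
    omega
  have := Multiset.countP_le_card q (D - E)
  omega

theorem stmt8 {p : ℕ} (hp : 1 ≤ p)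
    (Dp Dn Ep En : Multiset (Fin p → ℝ)) (ap an : ℕ)
    (hap : 2 * ap < Multiset.card Dp) (han : 2 * an < Multiset.card Dn)
    (hBFA : IsBFA ap an Dp Dn Ep En) :
    ∀ h : (Fin p → ℝ) × ℝ, Majority h Ep En →
      errPos h Dp < Multiset.card Dp ∧ errNeg h Dn < Multiset.card Dn := by
  intro h hMaj
  obtain ⟨hcp, hcn, hbp, hbn⟩ := hBFA
  obtain ⟨hmp, hmn⟩ := hMaj
  have k1 : errPos h Dp ≤ errPos h Ep + Multiset.card (Ep - Dp) := by
    have := key_count (fun x => hval h x ≤ 0) Dp Ep hcp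
    convert this using 7 <;> simp only [errPos] <;> congr
  have k2 : errNeg h Dn ≤ errNeg h En + Multiset.card (En - Dn) := by
    have := key_count (fun x => 0 < hval h x) Dn En hcn
    convert this using 7 <;> simp only [errNeg] <;> congr
  constructor <;> omega
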